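/- In the Laurent polynomial ring ℤ[A^{±1}], the quotient by the ideal generated by the 3×3 matrix relations given by the rows (1−A, −1, A), (A, 1−A, −1), (−1, A, 1−A) applied to a free module of rank 3 — i.e., the cokernel of the ℤ[A^{±1}]-linear map ℤ[A^{±1}]³ → ℤ[A^{±1}]³ given by this matrix — is isomorphic as a ℤ[A^{±1}]-module to ℤ[A^{±1}]/(A²−A+1) ⊕ ℤ[A^{±1}]. -/

import Mathlib

open LaurentPolynomial

namespace Stmt9Aux

noncomputable section

abbrev R := LaurentPolynomial ℤ

noncomputable def t : R := T 1

noncomputable def q : R := t ^ 2 - t + 1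

noncomputable def Mm : Matrix (Fin 3) (Fin 3) R :=
  !![1 - t, -1, t; t, 1 - t, -1; -1, t, 1 - t]

noncomputable def P : Matrix (Fin 3) (Fin 3) R := !![1, 0, 0; 1 - t, 1, 0; 1, 1, 1]
noncomputable def Pinv : Matrix (Fin 3) (Fin 3) R := !![1, 0, 0; t - 1, 1, 0; -t, -1, 1]
noncomputable def Q : Matrix (Fin 3) (Fin 3) R := !![0, 1, 1; -1, 1 - t, 1; 0, 0, 1]
noncomputable def Qinv : Matrix (Fin 3) (Fin 3) R := !![1 - t, -1, t; 1, 0, -1; 0, 0, 1]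
noncomputable def D : Matrix (Fin 3) (Fin 3) R := !![1, 0, 0; 0, q, 0; 0, 0, 0]

lemma hPPinv : P * Pinv = 1 := by
  apply Matrix.ext
  intro i j
  fin_cases i <;> fin_cases j <;>
    simp [P, Pinv, Matrix.vecHead, Matrix.vecTail, Matrix.mul_apply, Fin.sum_univ_three, Matrix.one_apply] <;> ring

lemma hQQinv : Q * Qinv = 1 := by
  apply Matrix.ext
  intro i j
  fin_cases i <;> fin_cases j <;>
    simp [Q, Qinv, Matrix.vecHead, Matrix.vecTail, Matrix.mul_apply, Fin.sum_univ_three, Matrix.one_apply] <;> ring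

lemma hQinvQ : Qinv * Q = 1 := by
  apply Matrix.ext
  intro i j
  fin_cases i <;> fin_cases j <;>
    simp [Q, Qinv, Matrix.vecHead, Matrix.vecTail, Matrix.mul_apply, Fin.sum_univ_three, Matrix.one_apply] <;> ring

lemma hPinvP : Pinv * P = 1 := by
  apply Matrix.ext
  intro i j
  fin_cases i <;> fin_cases j <;>
    simp [P, Pinv, Matrix.vecHead, Matrix.vecTail, Matrix.mul_apply, Fin.sum_univ_three, Matrix.one_apply] <;> ring

lemma hPMQ : P * Mm * Q = D := by
  apply Matrix.ext
  intro i j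
  fin_cases i <;> fin_cases j <;>
    simp [P, Mm, Q, D, q, Matrix.vecHead, Matrix.vecTail, Matrix.mul_apply, Fin.sum_univ_three] <;> ring

noncomputable def φ : (Fin 3 → R) ≃ₗ[R] (Fin 3 → R) :=
  LinearEquiv.ofLinear (Matrix.toLin' P) (Matrix.toLin' Pinv)
    (by rw [← Matrix.toLin'_mul, hPPinv, Matrix.toLin'_one])
    (by rw [← Matrix.toLin'_mul, hPinvP, Matrix.toLin'_one])

noncomputable def ψ : (Fin 3 → R) ≃ₗ[R] (Fin 3 → R) :=
  LinearEquiv.ofLinear (Matrix.toLin' Q) (Matrix.toLin' Qinv)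
    (by rw [← Matrix.toLin'_mul, hQQinv, Matrix.toLin'_one])
    (by rw [← Matrix.toLin'_mul, hQinvQ, Matrix.toLin'_one])

lemma hmap :
    (LinearMap.range (Matrix.toLin' Mm)).map (φ : (Fin 3 → R) →ₗ[R] (Fin 3 → R))
      = LinearMap.range (Matrix.toLin' D) := by
  have h1 : (LinearMap.range (Matrix.toLin' Mm)).map (Matrix.toLin' P)
      = LinearMap.range (Matrix.toLin' (P * Mm)) := by
    rw [Matrix.toLin'_mul, LinearMap.range_comp]
  have h2 : LinearMap.range (Matrix.toLin' (P * Mm * Q))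
      = LinearMap.range (Matrix.toLin' (P * Mm)) := by
    rw [Matrix.toLin'_mul, LinearMap.range_comp]
    have : LinearMap.range (Matrix.toLin' Q) = ⊤ :=
      LinearMap.range_eq_top.2 ψ.surjective
    rw [this, Submodule.map_top]
  show (LinearMap.range (Matrix.toLin' Mm)).map (Matrix.toLin' P) = _
  rw [h1, ← h2, hPMQ]

noncomputable def π : (Fin 3 → R) →ₗ[R] (R ⧸ Ideal.span {q}) × R :=
  LinearMap.prod ((Ideal.span {q}).mkQ.comp (LinearMap.proj 1)) (LinearMap.proj 2)

lemma hπ_surj : Function.Surjective π := by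
  rintro ⟨x, y⟩
  obtain ⟨r, rfl⟩ := Submodule.Quotient.mk_surjective _ x
  exact ⟨![0, r, y], by simp [π]⟩

lemma hker : LinearMap.ker π = LinearMap.range (Matrix.toLin' D) := by
  ext v
  simp only [LinearMap.mem_ker, π, LinearMap.prod_apply, LinearMap.mem_range,
    Function.prod, Prod.mk_eq_zero, LinearMap.comp_apply, LinearMap.proj_apply,
    Submodule.mkQ_apply, Submodule.Quotient.mk_eq_zero, Ideal.mem_span_singleton]
  constructor
  · rintro ⟨⟨c, hc⟩, h2⟩
    refine ⟨![v 0, c, 0], ?_⟩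
    funext i
    rw [Matrix.toLin'_apply]
    fin_cases i <;>
      simp [D, Matrix.mulVec, dotProduct, Fin.sum_univ_three, Matrix.vecHead, Matrix.vecTail, hc, h2, mul_comm]
  · rintro ⟨w, rfl⟩
    rw [Matrix.toLin'_apply]
    constructor
    · exact ⟨w 1, by simp [D, Matrix.mulVec, dotProduct, Matrix.vecHead, Matrix.vecTail, Fin.sum_univ_three]⟩
    · simp [D, Matrix.mulVec, dotProduct, Matrix.vecHead, Matrix.vecTail, Fin.sum_univ_three]

noncomputable def finalEquiv :
    ((Fin 3 → R) ⧸ LinearMap.range (Matrix.toLin' Mm))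
      ≃ₗ[R] (R ⧸ Ideal.span {q}) × R :=
  (Submodule.Quotient.equiv _ _ φ hmap).trans
    ((Submodule.quotEquivOfEq _ _ hker.symm).trans
      (π.quotKerEquivOfSurjective hπ_surj))

end

end Stmt9Aux

/-- the cokernel of the map `ℤ[A^{±1}]³ → ℤ[A^{±1}]³` given by the
presentation matrix of the trefoil knot is isomorphic to
`ℤ[A^{±1}]/(A²-A+1) ⊕ ℤ[A^{±1}]`. -/
theorem stmt9 :
    Nonempty
      ((((Fin 3 → LaurentPolynomial ℤ) ⧸
          LinearMap.range (Matrix.toLin'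
            (!![1 - T 1, -1, T 1; T 1, 1 - T 1, -1; -1, T 1, 1 - T 1] :
              Matrix (Fin 3) (Fin 3) (LaurentPolynomial ℤ)))))
        ≃ₗ[LaurentPolynomial ℤ]
          ((LaurentPolynomial ℤ ⧸
              Ideal.span {(T 1 : LaurentPolynomial ℤ) ^ 2 - T 1 + 1}) ×
            LaurentPolynomial ℤ)) :=
  ⟨Stmt9Aux.finalEquiv⟩
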